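/- Let G be the group with presentation on two generators a, b and the two relators R₁ = a³b⁻¹a²b⁻²a⁻¹·b⁻²a⁻¹·b⁻²a²b⁻¹a³b and R₂ = a³b⁻¹a³b·ba⁻²ba⁻³·ba⁻²ba⁻³ba⁻²b² (the fundamental group of the hyperbolic football manifold (5,6,6)). Then the abelianization of G (its first homology group H₁) is a cyclic group of order 14, i.e. it is isomorphic to ℤ/14ℤ. -/

import Mathlib

namespace FootballManifold

/-- The generator `a` of the free group on two generators. -/
def a : FreeGroup (Fin 2) := FreeGroup.of 0

/-- The generator `b` of the free group on two generators. -/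
def b : FreeGroup (Fin 2) := FreeGroup.of 1

/-- The first relator of the football manifold group. -/
def R₁ : FreeGroup (Fin 2) :=
  a^3 * b⁻¹ * a^2 * (b⁻¹)^2 * a⁻¹ * (b⁻¹)^2 * a⁻¹ * (b⁻¹)^2 * a^2 * b⁻¹ * a^3 * b

/-- The second relator of the football manifold group. -/
def R₂ : FreeGroup (Fin 2) :=
  a^3 * b⁻¹ * a^3 * b^2 * (a⁻¹)^2 * b * (a⁻¹)^3 * b * (a⁻¹)^2 * b * (a⁻¹)^3 * b * (a⁻¹)^2 * b^2

/-- The fundamental group `G` of the hyperbolic football manifold `(5,6,6)`. -/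
def G : Type := PresentedGroup ({R₁, R₂} : Set (FreeGroup (Fin 2)))

instance : Group G := by unfold G; infer_instance

-- f : images of generators
def f : Fin 2 → Multiplicative (ZMod 14) := ![Multiplicative.ofAdd 7, Multiplicative.ofAdd 2]

lemma hrel : ∀ r ∈ ({R₁, R₂} : Set (FreeGroup (Fin 2))), FreeGroup.lift f r = 1 := by
  rintro r (rfl | rfl) <;>
    simp only [R₁, R₂, a, b, map_mul, map_pow, map_inv, FreeGroup.lift_apply_of, f] <;>
    decide

def φ : G →* Multiplicative (ZMod 14) := PresentedGroup.toGroup hrel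

def φ' : Abelianization G →* Multiplicative (ZMod 14) := Abelianization.lift φ

-- canonical map FreeGroup → Abelianization G
def j : FreeGroup (Fin 2) →* Abelianization G :=
  Abelianization.of.comp (QuotientGroup.mk' (Subgroup.normalClosure ({R₁, R₂} : Set (FreeGroup (Fin 2)))))

noncomputable abbrev A : Abelianization G := j a
noncomputable abbrev B : Abelianization G := j b

lemma j_rel₁ : j R₁ = 1 := by
  have : (QuotientGroup.mk' (Subgroup.normalClosure ({R₁, R₂} : Set (FreeGroup (Fin 2))))) R₁ = 1 := by
    rw [QuotientGroup.mk'_apply, QuotientGroup.eq_one_iff]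
    exact Subgroup.subset_normalClosure (by simp)
  rw [show j R₁ = Abelianization.of ((QuotientGroup.mk' (Subgroup.normalClosure ({R₁, R₂} : Set (FreeGroup (Fin 2))))) R₁) from rfl, this, map_one]
  rfl

lemma j_rel₂ : j R₂ = 1 := by
  have : (QuotientGroup.mk' (Subgroup.normalClosure ({R₁, R₂} : Set (FreeGroup (Fin 2))))) R₂ = 1 := by
    rw [QuotientGroup.mk'_apply, QuotientGroup.eq_one_iff]
    exact Subgroup.subset_normalClosure (by simp)
  rw [show j R₂ = Abelianization.of ((QuotientGroup.mk' (Subgroup.normalClosure ({R₁, R₂} : Set (FreeGroup (Fin 2))))) R₂) from rfl, this, map_one]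
  rfl

lemma hW1 : A^8 = B^7 := by
  have h := j_rel₁
  simp only [R₁, map_mul, map_pow, map_inv] at h
  have : A^8 * (B^7)⁻¹ = 1 := by
    rw [← h]
    apply Additive.ofMul.injective
    simp only [ofMul_mul, ofMul_pow, ofMul_inv]
    abel
  exact (mul_inv_eq_one.mp this)

lemma hW2 : B^7 = A^6 := by
  have h := j_rel₂
  simp only [R₂, map_mul, map_pow, map_inv] at h
  have : B^7 * (A^6)⁻¹ = 1 := by
    rw [← h]
    apply Additive.ofMul.injective
    simp only [ofMul_mul, ofMul_pow, ofMul_inv]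
    abel
  exact (mul_inv_eq_one.mp this)

lemma hA2 : A^2 = 1 := by
  have h : A^6 * A^2 = A^6 * 1 := by
    rw [← pow_add, mul_one]
    rw [hW1, hW2]
  exact mul_left_cancel h

lemma hB7 : B^7 = 1 := by
  rw [hW2, show (6:ℕ) = 2*3 by norm_num, pow_mul, hA2, one_pow]

noncomputable abbrev g : Abelianization G := A * (B^3)⁻¹

lemma hg2 : g^2 = B := by
  have : g^2 = A^2 * ((B^7)⁻¹ * B) := by
    apply Additive.ofMul.injective
    simp only [g, ofMul_mul, ofMul_pow, ofMul_inv]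
    abel
  rw [this, hA2, hB7]; simp

lemma hg7 : g^7 = A := by
  have : g^7 = (A^2)^3 * ((B^7)⁻¹)^3 * A := by
    apply Additive.ofMul.injective
    simp only [g, ofMul_mul, ofMul_pow, ofMul_inv]
    abel
  rw [this, hA2, hB7]; simp

lemma hg14 : g^14 = 1 := by
  rw [show (14:ℕ) = 2*7 by norm_num, pow_mul, hg2, hB7]

noncomputable def ψ : Multiplicative (ZMod 14) →* Abelianization G :=
  AddMonoidHom.toMultiplicativeLeft
    (ZMod.lift 14 ⟨zmultiplesHom (Additive (Abelianization G)) (Additive.ofMul g), by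
      show (14:ℤ) • Additive.ofMul g = 0
      rw [← ofMul_zpow, show ((14:ℤ)) = ((14:ℕ):ℤ) from rfl, zpow_natCast, hg14, ofMul_one]⟩)

lemma ψ_int (k : ℤ) : ψ (Multiplicative.ofAdd ((k : ZMod 14))) = g ^ k := by
  simp only [ψ, AddMonoidHom.toMultiplicativeLeft, Equiv.coe_fn_mk, MonoidHom.coe_mk,
    OneHom.coe_mk, toAdd_ofAdd, ZMod.lift_coe, zmultiplesHom_apply]
  change Additive.toMul ((ZMod.lift 14 _) ((k : ZMod 14))) = _
  rw [ZMod.lift_coe, zmultiplesHom_apply, toMul_zsmul, toMul_ofMul]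


lemma φ'_A : φ' A = Multiplicative.ofAdd 7 := by
  show φ' (Abelianization.of (PresentedGroup.of (rels := ({R₁, R₂} : Set (FreeGroup (Fin 2)))) 0)) = _
  rw [φ']; erw [Abelianization.lift_apply_of]

lemma φ'_B : φ' B = Multiplicative.ofAdd 2 := by
  show φ' (Abelianization.of (PresentedGroup.of (rels := ({R₁, R₂} : Set (FreeGroup (Fin 2)))) 1)) = _
  rw [φ']; erw [Abelianization.lift_apply_of]

lemma φ'_g : φ' g = Multiplicative.ofAdd 1 := by
  rw [show g = A * (B^3)⁻¹ from rfl, map_mul, map_inv, map_pow, φ'_A, φ'_B]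
  decide

lemma left_inv : φ'.comp ψ = MonoidHom.id _ := by
  refine MonoidHom.ext fun x => ?_
  obtain ⟨k, rfl⟩ : ∃ k : ℤ, Multiplicative.ofAdd ((k : ZMod 14)) = x := by
    obtain ⟨k, hk⟩ := ZMod.intCast_surjective (Multiplicative.toAdd x)
    exact ⟨k, by rw [hk]; rfl⟩
  rw [MonoidHom.comp_apply, MonoidHom.id_apply, ψ_int, map_zpow, φ'_g, ← ofAdd_zsmul]
  congr 1
  simp

lemma right_inv : ψ.comp φ' = MonoidHom.id _ := by
  apply Abelianization.hom_ext
  apply PresentedGroup.ext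
  intro x
  fin_cases x
  · show ψ (φ' A) = A
    rw [φ'_A, show ((7 : ZMod 14)) = (((7:ℤ) : ZMod 14)) by norm_num, ψ_int,
      show ((7:ℤ)) = ((7:ℕ):ℤ) from rfl, zpow_natCast, hg7]
  · show ψ (φ' B) = B
    rw [φ'_B, show ((2 : ZMod 14)) = (((2:ℤ) : ZMod 14)) by norm_num, ψ_int,
      show ((2:ℤ)) = ((2:ℕ):ℤ) from rfl, zpow_natCast, hg2]


theorem football_homology :
    Nonempty (Abelianization G ≃* Multiplicative (ZMod 14)) := by
  exact ⟨MonoidHom.toMulEquiv φ' ψ right_inv left_inv⟩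

end FootballManifold
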